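/- Fano's inequality: let 𝒳, 𝒴 be finite sets, X, Y random variables valued in 𝒳, 𝒴, and f : 𝒴 → 𝒳 a function. Let P_e = P(X ≠ f(Y)). Then H(X|Y) ≤ H(P_e) + P_e · log|𝒳|, where H(p) = −p log p − (1−p) log(1−p). -/
import Mathlib


open MeasureTheory Filter

/-- Shannon entropy of a finite-valued random variable. -/
noncomputable def finEnt {Ω 𝒳 : Type*} [MeasurableSpace Ω] [Fintype 𝒳]
    (P : MeasureTheory.Measure Ω) (X : Ω → 𝒳) : ℝ :=
  -∑ x : 𝒳, (P {ω | X ω = x}).toReal * Real.log (P {ω | X ω = x}).toReal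

/-- The binary entropy function `H(p) = -p log p - (1-p) log (1-p)`. -/
noncomputable def binEnt (p : ℝ) : ℝ := -(p * Real.log p) - (1 - p) * Real.log (1 - p)

private lemma gibbs_term {p cq : ℝ} (hp : 0 ≤ p) (hcq : 0 ≤ cq)
    (h : p ≠ 0 → cq ≠ 0) : p * Real.log (cq / p) ≤ cq - p := by
  rcases eq_or_lt_of_le hp with h0 | h0
  · simp [← h0, hcq]
  · have hcq' : 0 < cq := lt_of_le_of_ne hcq (Ne.symm (h h0.ne'))
    have hlog := Real.log_le_sub_one_of_pos (div_pos hcq' h0)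
    calc p * Real.log (cq / p) ≤ p * (cq / p - 1) :=
        mul_le_mul_of_nonneg_left hlog hp
      _ = cq - p := by field_simp

private lemma fano_real {𝒳 𝒴 : Type*} [Fintype 𝒳] [Fintype 𝒴] [DecidableEq 𝒳]
    (p : 𝒳 → 𝒴 → ℝ) (q : 𝒴 → ℝ) (f : 𝒴 → 𝒳) (e K : ℝ)
    (hpnn : ∀ x y, 0 ≤ p x y)
    (hq : ∀ y, q y = ∑ x, p x y)
    (hcor : ∑ y, p (f y) y = 1 - e)
    (herr : ∑ y, ∑ x, (if x = f y then 0 else p x y) = e)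
    (he0 : 0 ≤ e) (he1 : e ≤ 1)
    (hperr : ∀ x y, x ≠ f y → p x y ≤ e)
    (hpcor : ∀ x y, x = f y → p x y ≤ 1 - e)
    (hK1 : 1 ≤ K) (hKcard : K = (Fintype.card 𝒳 : ℝ))
    (hK2 : 0 < e → 2 ≤ K) :
    (-∑ x, ∑ y, p x y * Real.log (p x y)) - (-∑ y, q y * Real.log (q y)) ≤
      binEnt e + e * Real.log K := by
  classical
  set c : 𝒳 → 𝒴 → ℝ := fun x y => if x = f y then 1 - e else e / (K - 1) with hc_def
  have hcnn : ∀ x y, 0 ≤ c x y := by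
    intro x y
    by_cases h : x = f y
    · simp only [hc_def, if_pos h]; linarith
    · simp only [hc_def, if_neg h]; exact div_nonneg he0 (by linarith)
  have hqnn : ∀ y, 0 ≤ q y := fun y => (hq y) ▸ Finset.sum_nonneg fun x _ => hpnn x y
  have hpq : ∀ x y, p x y ≤ q y := by
    intro x y
    rw [hq y]
    exact Finset.single_le_sum (fun x _ => hpnn x y) (Finset.mem_univ x)
  have hcpos : ∀ x y, p x y ≠ 0 → 0 < c x y := by
    intro x y hne
    have hppos : 0 < p x y := lt_of_le_of_ne (hpnn x y) (Ne.symm hne)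
    by_cases h : x = f y
    · have := hpcor x y h
      simp only [hc_def, if_pos h]
      linarith
    · have hee : 0 < e := lt_of_lt_of_le hppos (hperr x y h)
      have hKK := hK2 hee
      simp only [hc_def, if_neg h]
      exact div_pos hee (by linarith)
  have hqpos : ∀ x y, p x y ≠ 0 → 0 < q y := by
    intro x y hne
    exact lt_of_lt_of_le (lt_of_le_of_ne (hpnn x y) (Ne.symm hne)) (hpq x y)
  have hsumc : ∀ y, ∑ x, c x y ≤ 1 := by
    intro y
    have h1 : ∑ x, c x y
        = (Fintype.card 𝒳 : ℝ) * (e / (K - 1)) + ((1 - e) - e / (K - 1)) := by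
      have : ∀ x, c x y = e / (K - 1) + (if x = f y then (1 - e) - e / (K - 1) else 0) := by
        intro x; by_cases h : x = f y <;> simp [hc_def, h]
      rw [Finset.sum_congr rfl (fun x _ => this x), Finset.sum_add_distrib,
        Finset.sum_const, Finset.sum_ite_eq' Finset.univ (f y)
          (fun _ => (1 - e) - e / (K - 1))]
      simp [Finset.card_univ]
    have h2 : (K - 1) * (e / (K - 1)) ≤ e := by
      rcases eq_or_ne K 1 with h | h
      · simp [h, he0]
      · rw [mul_comm, div_mul_cancel₀ _ (sub_ne_zero.mpr h)]
    rw [h1, ← hKcard]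
    nlinarith [h2]
  have step1 : ∑ y, ∑ x, p x y * Real.log (c x y * q y / p x y) ≤ 0 := by
    have hterm : ∀ y, ∑ x, p x y * Real.log (c x y * q y / p x y)
        ≤ ∑ x, (c x y * q y - p x y) := by
      intro y
      refine Finset.sum_le_sum fun x _ => ?_
      exact gibbs_term (hpnn x y) (mul_nonneg (hcnn x y) (hqnn y))
        (fun h => (mul_pos (hcpos x y h) (hqpos x y h)).ne')
    calc ∑ y, ∑ x, p x y * Real.log (c x y * q y / p x y)
        ≤ ∑ y, ∑ x, (c x y * q y - p x y) :=
          Finset.sum_le_sum fun y _ => hterm y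
      _ = ∑ y, ((∑ x, c x y) * q y - q y) := by
          refine Finset.sum_congr rfl fun y _ => ?_
          rw [Finset.sum_sub_distrib, ← Finset.sum_mul, ← hq y]
      _ ≤ 0 := by
          refine Finset.sum_nonpos fun y _ => ?_
          nlinarith [hsumc y, hqnn y]
  have step2 : ∀ x y, p x y * Real.log (c x y * q y / p x y)
      = p x y * Real.log (c x y) + p x y * Real.log (q y) - p x y * Real.log (p x y) := by
    intro x y
    rcases eq_or_ne (p x y) 0 with h | h
    · simp [h]
    · rw [Real.log_div (mul_ne_zero (hcpos x y h).ne' (hqpos x y h).ne') h,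
        Real.log_mul (hcpos x y h).ne' (hqpos x y h).ne']
      ring
  have hB : ∀ y, ∑ x, p x y * Real.log (q y) = q y * Real.log (q y) := by
    intro y; rw [← Finset.sum_mul, ← hq y]
  have hA : ∑ y, ∑ x, p x y * Real.log (c x y)
      = (1 - e) * Real.log (1 - e) + e * Real.log (e / (K - 1)) := by
    have hAy : ∀ y, ∑ x, p x y * Real.log (c x y)
        = p (f y) y * Real.log (1 - e)
          + (∑ x, if x = f y then 0 else p x y) * Real.log (e / (K - 1)) := by
      intro y
      have : ∀ x, p x y * Real.log (c x y)
          = (if x = f y then p x y else 0) * Real.log (1 - e)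
            + (if x = f y then 0 else p x y) * Real.log (e / (K - 1)) := by
        intro x; by_cases h : x = f y <;> simp [hc_def, h]
      rw [Finset.sum_congr rfl (fun x _ => this x), Finset.sum_add_distrib,
        ← Finset.sum_mul, ← Finset.sum_mul,
        Finset.sum_ite_eq' Finset.univ (f y) (fun x => p x y)]
      simp
    rw [Finset.sum_congr rfl (fun y _ => hAy y), Finset.sum_add_distrib,
      ← Finset.sum_mul, ← Finset.sum_mul, hcor, herr]
  have key : (-∑ x, ∑ y, p x y * Real.log (p x y)) - (-∑ y, q y * Real.log (q y))
      ≤ -((1 - e) * Real.log (1 - e) + e * Real.log (e / (K - 1))) := by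
    have hswap : ∑ x, ∑ y, p x y * Real.log (p x y)
        = ∑ y, ∑ x, p x y * Real.log (p x y) := Finset.sum_comm
    have hexp_y : ∀ y, ∑ x, p x y * Real.log (c x y * q y / p x y)
        = (∑ x, p x y * Real.log (c x y)) + q y * Real.log (q y)
          - ∑ x, p x y * Real.log (p x y) := by
      intro y
      rw [Finset.sum_congr rfl (fun x _ => step2 x y)]
      simp only [Finset.sum_sub_distrib, Finset.sum_add_distrib, hB y]
    have hexp : ∑ y, ∑ x, p x y * Real.log (c x y * q y / p x y)
        = (∑ y, ∑ x, p x y * Real.log (c x y)) + (∑ y, q y * Real.log (q y))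
          - ∑ y, ∑ x, p x y * Real.log (p x y) := by
      rw [Finset.sum_congr rfl (fun y _ => hexp_y y)]
      simp only [Finset.sum_sub_distrib, Finset.sum_add_distrib]
    have h0 := step1
    rw [hexp, hA] at h0
    rw [hswap]
    linarith
  refine key.trans ?_
  have : -(e * Real.log (e / (K - 1))) ≤ -(e * Real.log e) + e * Real.log K := by
    rcases eq_or_lt_of_le he0 with h | h
    · simp [← h]
    · have hKK := hK2 h
      rw [Real.log_div h.ne' (by linarith : K - 1 ≠ 0)]
      have hlog : Real.log (K - 1) ≤ Real.log K :=
        Real.log_le_log (by linarith) (by linarith)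
      nlinarith [hlog]
  rw [binEnt]
  linarith

private lemma meas_fiber_sum {Ω β : Type*} [MeasurableSpace Ω] [Fintype β]
    (P : Measure Ω) (g : Ω → β) (s : Set Ω)
    (h : ∀ b, MeasurableSet (s ∩ {ω | g ω = b})) :
    P s = ∑ b, P (s ∩ {ω | g ω = b}) := by
  classical
  have hdisj : ((Finset.univ : Finset β) : Set β).PairwiseDisjoint
      (fun b => s ∩ {ω | g ω = b}) := by
    intro a _ b _ hab
    refine Set.disjoint_left.mpr fun ω h1 h2 => hab ?_
    exact h1.2.symm.trans h2.2
  calc P s = P (⋃ b ∈ (Finset.univ : Finset β), s ∩ {ω | g ω = b}) := by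
        congr 1; ext ω; simp
    _ = ∑ b, P (s ∩ {ω | g ω = b}) := measure_biUnion_finset hdisj (fun b _ => h b)

/-- Fano's inequality: `H(X|Y) ≤ H(P_e) + P_e log |𝒳|` where `P_e = ℙ(X ≠ f(Y))`
and `H(X|Y) = H(X,Y) - H(Y)`. -/
theorem fano_inequality {Ω 𝒳 𝒴 : Type*} [MeasurableSpace Ω]
    [Fintype 𝒳] [Fintype 𝒴] [MeasurableSpace 𝒳] [DiscreteMeasurableSpace 𝒳]
    [MeasurableSpace 𝒴] [DiscreteMeasurableSpace 𝒴]
    (P : Measure Ω) [IsProbabilityMeasure P] (X : Ω → 𝒳) (Y : Ω → 𝒴) (f : 𝒴 → 𝒳)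
    (hX : Measurable X) (hY : Measurable Y) :
    finEnt P (fun ω => (X ω, Y ω)) - finEnt P Y ≤
      binEnt (P {ω | X ω ≠ f (Y ω)}).toReal +
        (P {ω | X ω ≠ f (Y ω)}).toReal * Real.log (Fintype.card 𝒳) := by
  classical
  set e : ℝ := (P {ω | X ω ≠ f (Y ω)}).toReal with he_def
  set p : 𝒳 → 𝒴 → ℝ := fun x y => (P {ω | X ω = x ∧ Y ω = y}).toReal with hp_def
  set q : 𝒴 → ℝ := fun y => (P {ω | Y ω = y}).toReal with hq_def
  -- basic measurability
  have hAxy : ∀ (x : 𝒳) (y : 𝒴), MeasurableSet {ω | X ω = x ∧ Y ω = y} := by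
    intro x y
    have : {ω | X ω = x ∧ Y ω = y} = X ⁻¹' {x} ∩ Y ⁻¹' {y} := by ext ω; simp
    rw [this]
    exact (hX (measurableSet_singleton x)).inter (hY (measurableSet_singleton y))
  have hEqSet : MeasurableSet {ω | X ω = f (Y ω)} := by
    have : {ω | X ω = f (Y ω)} = (fun ω => (X ω, Y ω)) ⁻¹' {z : 𝒳 × 𝒴 | z.1 = f z.2} := by
      ext ω; simp
    rw [this]
    exact (hX.prodMk hY) ((Set.toFinite _).measurableSet)
  -- nonempty
  have hΩne : Nonempty Ω := by
    by_contra h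
    have h1 : (P Set.univ) = 1 := measure_univ
    rw [Set.univ_eq_empty_iff.mpr (not_nonempty_iff.mp h), measure_empty] at h1
    exact zero_ne_one h1
  have h𝒳ne : Nonempty 𝒳 := ⟨X (Classical.choice hΩne)⟩
  have hq_sum : ∀ y, q y = ∑ x, p x y := by
    intro y
    have h1 : P {ω | Y ω = y} = ∑ x, P ({ω | Y ω = y} ∩ {ω | X ω = x}) :=
      meas_fiber_sum P X {ω | Y ω = y}
        (fun x => by
          have : {ω | Y ω = y} ∩ {ω | X ω = x} = {ω | X ω = x ∧ Y ω = y} := by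
            ext ω; simp [and_comm]
          rw [this]; exact hAxy x y)
    have h2 : ∀ x, {ω | Y ω = y} ∩ {ω | X ω = x} = {ω | X ω = x ∧ Y ω = y} := by
      intro x; ext ω; simp [and_comm]
    rw [hq_def]
    simp only
    rw [h1, ENNReal.toReal_sum (fun x _ => measure_ne_top _ _)]
    exact Finset.sum_congr rfl fun x _ => by rw [h2 x]
  have hq1 : ∑ y, q y = 1 := by
    have h1 : P Set.univ = ∑ y, P (Set.univ ∩ {ω | Y ω = y}) :=
      meas_fiber_sum P Y Set.univ
        (fun y => (MeasurableSet.univ).inter (hY (measurableSet_singleton y)))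
    rw [measure_univ] at h1
    have h2 := congrArg ENNReal.toReal h1
    rw [ENNReal.toReal_one, ENNReal.toReal_sum (fun y _ => measure_ne_top _ _)] at h2
    have h3 : ∀ y, q y = (P (Set.univ ∩ {ω | Y ω = y})).toReal := fun y => by
      rw [hq_def]; simp [Set.univ_inter]
    rw [Finset.sum_congr rfl fun y _ => h3 y]
    exact h2.symm
  -- 1 - e = P(X = f Y)
  have hcomp : (P {ω | X ω = f (Y ω)}).toReal = 1 - e := by
    have h1 : {ω | X ω ≠ f (Y ω)} = {ω | X ω = f (Y ω)}ᶜ := rfl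
    have h2 : P {ω | X ω = f (Y ω)} + P {ω | X ω = f (Y ω)}ᶜ = 1 :=
      (measure_add_measure_compl hEqSet).trans measure_univ
    have h3 := congrArg ENNReal.toReal h2
    rw [ENNReal.toReal_add (measure_ne_top _ _) (measure_ne_top _ _),
      ENNReal.toReal_one] at h3
    rw [he_def, h1]
    linarith
  have hcor : ∑ y, p (f y) y = 1 - e := by
    have h1 : P {ω | X ω = f (Y ω)} = ∑ y, P ({ω | X ω = f (Y ω)} ∩ {ω | Y ω = y}) :=
      meas_fiber_sum P Y {ω | X ω = f (Y ω)}
        (fun y => hEqSet.inter (hY (measurableSet_singleton y)))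
    have h2 : ∀ y, {ω | X ω = f (Y ω)} ∩ {ω | Y ω = y} = {ω | X ω = f y ∧ Y ω = y} := by
      intro y; ext ω
      simp only [Set.mem_inter_iff, Set.mem_setOf_eq]
      constructor
      · rintro ⟨h1', h2'⟩; subst h2'; exact ⟨h1', rfl⟩
      · rintro ⟨h1', h2'⟩; subst h2'; exact ⟨h1', rfl⟩
    rw [← hcomp]
    have h3 := congrArg ENNReal.toReal h1
    rw [ENNReal.toReal_sum (fun y _ => measure_ne_top _ _)] at h3
    rw [h3]
    exact (Finset.sum_congr rfl fun y _ => by rw [hp_def]; simp only; rw [h2 y]).symm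
  have hpnn : ∀ x y, 0 ≤ p x y := fun x y => ENNReal.toReal_nonneg
  have herr : ∑ y, ∑ x, (if x = f y then 0 else p x y) = e := by
    have h1 : ∀ y, ∑ x, (if x = f y then 0 else p x y) = q y - p (f y) y := by
      intro y
      have : ∑ x, p x y
          = (∑ x, if x = f y then p x y else 0) + ∑ x, (if x = f y then 0 else p x y) := by
        rw [← Finset.sum_add_distrib]
        exact Finset.sum_congr rfl fun x _ => by by_cases h : x = f y <;> simp [h]
      rw [Finset.sum_ite_eq' Finset.univ (f y) (fun x => p x y)] at this
      simp at this
      rw [hq_sum y]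
      linarith
    rw [Finset.sum_congr rfl fun y _ => h1 y, Finset.sum_sub_distrib, hq1, hcor]
    ring
  have he0 : 0 ≤ e := ENNReal.toReal_nonneg
  have he1 : e ≤ 1 := by
    rw [he_def]
    calc (P {ω | X ω ≠ f (Y ω)}).toReal ≤ (1 : ENNReal).toReal :=
        ENNReal.toReal_mono ENNReal.one_ne_top prob_le_one
      _ = 1 := ENNReal.toReal_one
  have hperr : ∀ x y, x ≠ f y → p x y ≤ e := by
    intro x y hxy
    refine ENNReal.toReal_mono (measure_ne_top _ _) (measure_mono ?_)
    rintro ω ⟨h1, h2⟩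
    simp only [Set.mem_setOf_eq]
    rw [h1, h2]
    exact hxy
  have hpcor : ∀ x y, x = f y → p x y ≤ 1 - e := by
    intro x y hxy
    rw [← hcomp]
    refine ENNReal.toReal_mono (measure_ne_top _ _) (measure_mono ?_)
    rintro ω ⟨h1, h2⟩
    simp only [Set.mem_setOf_eq]
    rw [h1, h2, hxy]
  have hK1 : (1 : ℝ) ≤ (Fintype.card 𝒳 : ℝ) := by
    exact_mod_cast Fintype.card_pos
  have hK2 : 0 < e → (2 : ℝ) ≤ (Fintype.card 𝒳 : ℝ) := by
    intro hee
    have hne : P {ω | X ω ≠ f (Y ω)} ≠ 0 := by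
      intro h; rw [he_def, h] at hee; simp at hee
    obtain ⟨ω, hω⟩ := nonempty_of_measure_ne_zero hne
    have : Nontrivial 𝒳 := ⟨⟨X ω, f (Y ω), hω⟩⟩
    have h2 : 2 ≤ Fintype.card 𝒳 := Fintype.one_lt_card
    exact_mod_cast h2
  -- entropy rewrites
  have hHY : finEnt P Y = -∑ y, q y * Real.log (q y) := rfl
  have hHXY : finEnt P (fun ω => (X ω, Y ω)) = -∑ x, ∑ y, p x y * Real.log (p x y) := by
    rw [finEnt, Fintype.sum_prod_type]
    congr 1
    refine Finset.sum_congr rfl fun x _ => Finset.sum_congr rfl fun y _ => ?_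
    have : {ω | (X ω, Y ω) = (x, y)} = {ω | X ω = x ∧ Y ω = y} := by
      ext ω; simp [Prod.ext_iff]
    rw [this, hp_def]
  rw [hHY, hHXY]
  exact fano_real p q f e (Fintype.card 𝒳 : ℝ) hpnn hq_sum hcor herr he0 he1
    hperr hpcor hK1 rfl hK2
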